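/- arXiv:1901.07254 — 5 statements merged into one kernel-verified Lean document; each statement's English description precedes it below -/
import Mathlib

section
/- Let Ω ⊆ ℂ be open, let Δ : Ω → ℂ^{p×p} be holomorphic (each matrix entry is complex-differentiable on Ω), and let z₀ ∈ Ω be a simple zero of det Δ, i.e., det Δ(z₀) = 0 and the complex derivative of z ↦ det Δ(z) at z₀ is nonzero. Then the kernel of the linear map ℂ^p → ℂ^p given by the matrix Δ(z₀) has dimension 1. -/
open Matrix Finset

/-- Jacobi-style formula: the derivative of `z ↦ det (Δ z)` is the sum over columns of the
determinant with that column replaced by its derivative. -/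
theorem det_hasDerivAt_aux {p : ℕ} (Δ : ℂ → Matrix (Fin p) (Fin p) ℂ) (z₀ : ℂ)
    (d : Matrix (Fin p) (Fin p) ℂ)
    (h : ∀ i j, HasDerivAt (fun z => Δ z i j) (d i j) z₀) :
    HasDerivAt (fun z => (Δ z).det)
      (∑ j, (Matrix.updateCol (Δ z₀) j (fun k => d k j)).det) z₀ := by
  have hprod : ∀ σ : Equiv.Perm (Fin p),
      HasDerivAt (fun z => ∏ i, Δ z (σ i) i)
        (∑ i, (∏ j ∈ Finset.univ.erase i, Δ z₀ (σ j) j) • d (σ i) i) z₀ :=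
    fun σ => HasDerivAt.fun_finsetProd (fun i _ => h (σ i) i)
  have hsum : HasDerivAt (fun z => ∑ σ : Equiv.Perm (Fin p), ((Equiv.Perm.sign σ : ℤ) : ℂ) * ∏ i, Δ z (σ i) i)
      (∑ σ : Equiv.Perm (Fin p),
        ((Equiv.Perm.sign σ : ℤ) : ℂ) * ∑ i, (∏ j ∈ Finset.univ.erase i, Δ z₀ (σ j) j) • d (σ i) i) z₀ :=
    HasDerivAt.fun_sum (fun σ _ => (hprod σ).const_mul (((Equiv.Perm.sign σ : ℤ) : ℂ)))
  have hfun : (fun z => (Δ z).det)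
      = fun z => ∑ σ : Equiv.Perm (Fin p), ((Equiv.Perm.sign σ : ℤ) : ℂ) * ∏ i, Δ z (σ i) i :=
    funext fun z => Matrix.det_apply' _
  have hder : (∑ j, (Matrix.updateCol (Δ z₀) j (fun k => d k j)).det)
      = ∑ σ : Equiv.Perm (Fin p),
        ((Equiv.Perm.sign σ : ℤ) : ℂ) * ∑ i, (∏ j ∈ Finset.univ.erase i, Δ z₀ (σ j) j) • d (σ i) i := by
    simp only [Matrix.det_apply', Finset.mul_sum, smul_eq_mul]
    rw [Finset.sum_comm]
    refine Finset.sum_congr rfl fun σ _ => Finset.sum_congr rfl fun j _ => ?_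
    rw [← Finset.mul_prod_erase Finset.univ
      (fun i => (Matrix.updateCol (Δ z₀) j (fun k => d k j)) (σ i) i) (Finset.mem_univ j)]
    have hrest : ∀ i ∈ Finset.univ.erase j,
        (Matrix.updateCol (Δ z₀) j (fun k => d k j)) (σ i) i = Δ z₀ (σ i) i := by
      intro i hi
      rw [Matrix.updateCol_apply, if_neg (Finset.mem_erase.mp hi).1]
    rw [Finset.prod_congr rfl hrest, Matrix.updateCol_apply, if_pos rfl]
    ring
  rw [hfun, hder] at *
  exact hsum

/-- If `Δ : Ω → ℂ^{p×p}` is holomorphic on the open set `Ω` and `z₀ ∈ Ω` is a simple zero of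
`det Δ`, then the kernel of the linear map given by `Δ z₀` has dimension 1. -/
theorem stmt1 {p : ℕ} (hp : 1 ≤ p) (Ω : Set ℂ) (hΩ : IsOpen Ω)
    (Δ : ℂ → Matrix (Fin p) (Fin p) ℂ)
    (hΔ : ∀ i j, DifferentiableOn ℂ (fun z => Δ z i j) Ω)
    (z₀ : ℂ) (hz₀ : z₀ ∈ Ω)
    (hdet0 : (Δ z₀).det = 0)
    (hdet' : deriv (fun z => (Δ z).det) z₀ ≠ 0) :
    Module.finrank ℂ (LinearMap.ker (Δ z₀).mulVecLin) = 1 := by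
  set K := LinearMap.ker (Δ z₀).mulVecLin with hK
  -- the kernel is nontrivial since the determinant vanishes
  have hker_pos : 0 < Module.finrank ℂ K := by
    obtain ⟨v, hv0, hv⟩ := (Matrix.exists_mulVec_eq_zero_iff).mpr hdet0
    have hmem : v ∈ K := by simpa [hK, Matrix.mulVecLin_apply] using hv
    have : Nontrivial K :=
      ⟨⟨⟨v, hmem⟩, 0, fun hc => hv0 (by simpa using congrArg Subtype.val hc)⟩⟩
    exact Module.finrank_pos
  by_contra hne
  have h2 : 2 ≤ Module.finrank ℂ K := by omega
  -- the derivative matrix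
  set d : Matrix (Fin p) (Fin p) ℂ :=
    Matrix.of (fun i j => deriv (fun z => Δ z i j) z₀) with hd
  have hD : ∀ i j, HasDerivAt (fun z => Δ z i j) (d i j) z₀ := fun i j =>
    ((hΔ i j).differentiableAt (hΩ.mem_nhds hz₀)).hasDerivAt
  have hderiv := det_hasDerivAt_aux Δ z₀ d hD
  -- each determinant with one differentiated column vanishes
  have hzero : ∀ j, (Matrix.updateCol (Δ z₀) j (fun k => d k j)).det = 0 := by
    intro j
    -- find a nonzero kernel vector with vanishing j-th coordinate
    set φ : K →ₗ[ℂ] ℂ := (LinearMap.proj j).comp K.subtype with hφ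
    have hrank : Module.finrank ℂ (LinearMap.range φ) + Module.finrank ℂ (LinearMap.ker φ)
        = Module.finrank ℂ K := LinearMap.finrank_range_add_finrank_ker φ
    have hrange : Module.finrank ℂ (LinearMap.range φ) ≤ 1 := by
      simpa using Submodule.finrank_le (LinearMap.range φ)
    have hkerφ : 0 < Module.finrank ℂ (LinearMap.ker φ) := by omega
    have : Nontrivial (LinearMap.ker φ) := Module.nontrivial_of_finrank_pos hkerφ
    obtain ⟨x, hx0⟩ := exists_ne (0 : LinearMap.ker φ)
    set v : Fin p → ℂ := ((x : K) : Fin p → ℂ) with hv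
    have hv0 : v ≠ 0 := by
      intro hc
      apply hx0
      have : (x : K) = 0 := Subtype.ext hc
      exact Subtype.ext this
    have hvj : v j = 0 := x.2
    have hMv : Δ z₀ *ᵥ v = 0 := by
      have h1 := (x : K).2
      have h2 : (Δ z₀).mulVecLin ((x : K) : Fin p → ℂ) = 0 := h1
      rw [Matrix.mulVecLin_apply] at h2
      exact h2
    have hNv : (Matrix.updateCol (Δ z₀) j (fun k => d k j)) *ᵥ v = 0 := by
      have heq : (Matrix.updateCol (Δ z₀) j (fun k => d k j)) *ᵥ v = Δ z₀ *ᵥ v := by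
        funext k
        simp only [Matrix.mulVec, dotProduct]
        refine Finset.sum_congr rfl fun i _ => ?_
        by_cases hi : i = j
        · subst hi; simp [hvj]
        · simp [Matrix.updateCol_apply, hi]
      rw [heq, hMv]
    exact (Matrix.exists_mulVec_eq_zero_iff).mp ⟨v, hv0, hNv⟩
  apply hdet'
  rw [hderiv.deriv]
  simp [hzero]
end

section
/- Let n₁, n₂, p, k, m ≥ 1, and let P₁ ∈ ℂ^{n₁×n₁}, Q₁ ∈ ℂ^{n₁×k}, R₁ ∈ ℂ^{p×n₁}, S₁ ∈ ℂ^{p×k}, P₂ ∈ ℂ^{n₂×n₂}, Q₂ ∈ ℂ^{n₂×m}, R₂ ∈ ℂ^{k×n₂}, S₂ ∈ ℂ^{k×m}. For z not an eigenvalue of P_ℓ define K₁(z) := R₁(zI − P₁)⁻¹Q₁ + S₁ and K₂(z) := R₂(zI − P₂)⁻¹Q₂ + S₂. Assume: (i) no λ ∈ ℂ with |λ| ≥ 1 is an eigenvalue of both P₁ and P₂; (ii) for every eigenvalue λ of P₂ with |λ| ≥ 1, the matrix K₁(λ) has full column rank k; (iii) for every eigenvalue λ of P₁ with |λ| ≥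 1, the matrix K₂(λ) has full row rank k; (iv) (P₁,Q₁) and (P₂,Q₂) are stabilizable and (R₁,P₁) and (R₂,P₂) are detectable. Then, setting P := [[P₁, Q₁R₂],[0, P₂]] (an (n₁+n₂)×(n₁+n₂) block matrix), Q := [Q₁S₂; Q₂] (block column), and R := [R₁, S₁R₂] (block row), the pair (P,Q) is stabilizable and the pair (R,P) is detectable. -/
open Matrix

/-- `(P,Q)` is stabilizable: for every `λ` with `|λ| ≥ 1` and every `ψ` with
`ψ*(λI − P) = 0` and `ψ*Q = 0`, one has `ψ = 0`. -/
def Stabilizable {n m : Type*} [Fintype n] [Fintype m] [DecidableEq n]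
    (P : Matrix n n ℂ) (Q : Matrix n m ℂ) : Prop :=
  ∀ l : ℂ, 1 ≤ ‖l‖ → ∀ ψ : n → ℂ,
    vecMul (star ψ) (l • (1 : Matrix n n ℂ) - P) = 0 → vecMul (star ψ) Q = 0 → ψ = 0

/-- `(R,P)` is detectable: for every `λ` with `|λ| ≥ 1` and every `x` with
`(λI − P)x = 0` and `Rx = 0`, one has `x = 0`. -/
def Detectable {n p : Type*} [Fintype n] [Fintype p] [DecidableEq n]
    (R : Matrix p n ℂ) (P : Matrix n n ℂ) : Prop :=
  ∀ l : ℂ, 1 ≤ ‖l‖ → ∀ x : n → ℂ,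
    mulVec (l • (1 : Matrix n n ℂ) - P) x = 0 → mulVec R x = 0 → x = 0

/-- `λ` is an eigenvalue of the square matrix `P`, i.e. a root of `det(λI − P)`. -/
def IsEigenvalue {n : Type*} [Fintype n] [DecidableEq n] (P : Matrix n n ℂ) (l : ℂ) : Prop :=
  (l • (1 : Matrix n n ℂ) - P).det = 0

lemma aux_mulVec_ker {p k : ℕ} (K : Matrix (Fin p) (Fin k) ℂ)
    (h : K.rank = k) {v : Fin k → ℂ} (hv : K *ᵥ v = 0) : v = 0 := by
  have h1 := LinearMap.finrank_range_add_finrank_ker K.mulVecLin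
  rw [Module.finrank_fin_fun ℂ] at h1
  have hr : Module.finrank ℂ (LinearMap.range K.mulVecLin) = k := h
  have h0 : Module.finrank ℂ (LinearMap.ker K.mulVecLin) = 0 := by omega
  have hker : LinearMap.ker K.mulVecLin = ⊥ := Submodule.finrank_eq_zero.mp h0
  have hm : v ∈ LinearMap.ker K.mulVecLin := by
    simpa [LinearMap.mem_ker, Matrix.mulVecLin_apply] using hv
  simpa [hker] using hm

lemma aux_vecMul_ker {k m : ℕ} (K : Matrix (Fin k) (Fin m) ℂ)
    (h : K.rank = k) {v : Fin k → ℂ} (hv : v ᵥ* K = 0) : v = 0 := by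
  refine aux_mulVec_ker Kᵀ ?_ (by rwa [mulVec_transpose])
  rw [rank_transpose]; exact h

lemma aux_vecMul_inv {n : ℕ} {M : Matrix (Fin n) (Fin n) ℂ} (hd : M.det ≠ 0)
    {v : Fin n → ℂ} (h : v ᵥ* M = 0) : v = 0 := by
  have := congrArg (fun w => w ᵥ* M⁻¹) h
  simpa [vecMul_vecMul, Matrix.mul_nonsing_inv _ (isUnit_iff_ne_zero.mpr hd)] using this

lemma aux_mulVec_inv {n : ℕ} {M : Matrix (Fin n) (Fin n) ℂ} (hd : M.det ≠ 0)
    {v : Fin n → ℂ} (h : M *ᵥ v = 0) : v = 0 := by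
  have := congrArg (fun w => M⁻¹ *ᵥ w) h
  simpa [mulVec_mulVec, Matrix.nonsing_inv_mul _ (isUnit_iff_ne_zero.mpr hd)] using this

/-- Stabilizability and detectability of the cascade realization of `K₁K₂`. -/
theorem stmt3 {n₁ n₂ p k m : ℕ} (hn₁ : 1 ≤ n₁) (hn₂ : 1 ≤ n₂) (hpk : 1 ≤ p)
    (hk : 1 ≤ k) (hm : 1 ≤ m)
    (P₁ : Matrix (Fin n₁) (Fin n₁) ℂ) (Q₁ : Matrix (Fin n₁) (Fin k) ℂ)
    (R₁ : Matrix (Fin p) (Fin n₁) ℂ) (S₁ : Matrix (Fin p) (Fin k) ℂ)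
    (P₂ : Matrix (Fin n₂) (Fin n₂) ℂ) (Q₂ : Matrix (Fin n₂) (Fin m) ℂ)
    (R₂ : Matrix (Fin k) (Fin n₂) ℂ) (S₂ : Matrix (Fin k) (Fin m) ℂ)
    (hdisj : ∀ l : ℂ, 1 ≤ ‖l‖ → ¬(IsEigenvalue P₁ l ∧ IsEigenvalue P₂ l))
    (hK₁rank : ∀ l : ℂ, 1 ≤ ‖l‖ → IsEigenvalue P₂ l →
      (R₁ * (l • (1 : Matrix (Fin n₁) (Fin n₁) ℂ) - P₁)⁻¹ * Q₁ + S₁).rank = k)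
    (hK₂rank : ∀ l : ℂ, 1 ≤ ‖l‖ → IsEigenvalue P₁ l →
      (R₂ * (l • (1 : Matrix (Fin n₂) (Fin n₂) ℂ) - P₂)⁻¹ * Q₂ + S₂).rank = k)
    (hstab₁ : Stabilizable P₁ Q₁) (hstab₂ : Stabilizable P₂ Q₂)
    (hdet₁ : Detectable R₁ P₁) (hdet₂ : Detectable R₂ P₂) :
    Stabilizable (fromBlocks P₁ (Q₁ * R₂) 0 P₂) (fromRows (Q₁ * S₂) Q₂) ∧
    Detectable (fromCols R₁ (S₁ * R₂)) (fromBlocks P₁ (Q₁ * R₂) 0 P₂) := by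
  have hblock : ∀ l : ℂ,
      l • (1 : Matrix (Fin n₁ ⊕ Fin n₂) (Fin n₁ ⊕ Fin n₂) ℂ) - fromBlocks P₁ (Q₁ * R₂) 0 P₂
        = fromBlocks (l • 1 - P₁) (-(Q₁ * R₂)) 0 (l • 1 - P₂) := by
    intro l
    rw [← fromBlocks_one, fromBlocks_smul]
    simp [sub_eq_add_neg, fromBlocks_neg, fromBlocks_add]
  constructor
  · -- Stabilizable
    intro l hl ψ h₁ h₂
    set ψ₁ : Fin n₁ → ℂ := ψ ∘ Sum.inl with hψ₁def
    set ψ₂ : Fin n₂ → ℂ := ψ ∘ Sum.inr with hψ₂def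
    have hsplit : star ψ = Sum.elim (star ψ₁) (star ψ₂) :=
      funext fun i => by cases i <;> rfl
    rw [hblock, hsplit, vecMul_fromBlocks] at h₁
    simp only [Sum.elim_comp_inl, Sum.elim_comp_inr, vecMul_zero, add_zero, zero_add] at h₁
    have e1 : star ψ₁ ᵥ* (l • 1 - P₁) = 0 := funext fun i => congrFun h₁ (Sum.inl i)
    have e2 : star ψ₁ ᵥ* (-(Q₁ * R₂)) + star ψ₂ ᵥ* (l • 1 - P₂) = 0 :=
      funext fun i => congrFun h₁ (Sum.inr i)
    rw [hsplit, sumElim_vecMul_fromRows] at h₂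
    by_cases heig1 : IsEigenvalue P₁ l
    · -- l is an eigenvalue of P₁, hence not of P₂
      have hM : (l • (1 : Matrix (Fin n₂) (Fin n₂) ℂ) - P₂).det ≠ 0 := by
        intro h; exact hdisj l hl ⟨heig1, h⟩
      have hu : IsUnit (l • (1 : Matrix (Fin n₂) (Fin n₂) ℂ) - P₂).det :=
        isUnit_iff_ne_zero.mpr hM
      set M := l • (1 : Matrix (Fin n₂) (Fin n₂) ℂ) - P₂ with hMdef
      set w : Fin k → ℂ := star ψ₁ ᵥ* Q₁ with hwdef
      have e2' : star ψ₂ ᵥ* M = w ᵥ* R₂ := by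
        have h' := e2
        rw [vecMul_neg, neg_add_eq_zero] at h'
        rw [← h', hwdef, vecMul_vecMul]
      have hψ₂val : star ψ₂ = w ᵥ* (R₂ * M⁻¹) := by
        calc star ψ₂ = star ψ₂ ᵥ* (M * M⁻¹) := by
              rw [Matrix.mul_nonsing_inv _ hu, vecMul_one]
          _ = (star ψ₂ ᵥ* M) ᵥ* M⁻¹ := by rw [vecMul_vecMul]
          _ = (w ᵥ* R₂) ᵥ* M⁻¹ := by rw [e2']
          _ = w ᵥ* (R₂ * M⁻¹) := by rw [vecMul_vecMul]
      have hw0 : w ᵥ* (R₂ * M⁻¹ * Q₂ + S₂) = 0 := by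
        rw [vecMul_add]
        have t1 : star ψ₁ ᵥ* (Q₁ * S₂) = w ᵥ* S₂ := by rw [hwdef, vecMul_vecMul]
        have t2 : star ψ₂ ᵥ* Q₂ = w ᵥ* (R₂ * M⁻¹ * Q₂) := by
          rw [hψ₂val, vecMul_vecMul, Matrix.mul_assoc]
        rw [t1, t2] at h₂
        rw [add_comm]; exact h₂
      have hw : w = 0 := aux_vecMul_ker _ (hK₂rank l hl heig1) hw0
      have hψ₁0 : ψ₁ = 0 := hstab₁ l hl ψ₁ e1 hw
      have hψ₂0 : ψ₂ = 0 := by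
        have : star ψ₂ = 0 := by rw [hψ₂val, hw, zero_vecMul]
        simpa using congrArg star this
      funext i
      cases i with
      | inl i => exact congrFun hψ₁0 i
      | inr i => exact congrFun hψ₂0 i
    · -- l is not an eigenvalue of P₁
      have hN : (l • (1 : Matrix (Fin n₁) (Fin n₁) ℂ) - P₁).det ≠ 0 := heig1
      have hψ₁s : star ψ₁ = 0 := aux_vecMul_inv hN e1
      have hψ₁0 : ψ₁ = 0 := by simpa using congrArg star hψ₁s
      rw [hψ₁s, zero_vecMul, zero_add] at e2 h₂
      have hψ₂0 : ψ₂ = 0 := hstab₂ l hl ψ₂ e2 h₂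
      funext i
      cases i with
      | inl i => exact congrFun hψ₁0 i
      | inr i => exact congrFun hψ₂0 i
  · -- Detectable
    intro l hl x h₁ h₂
    set x₁ : Fin n₁ → ℂ := x ∘ Sum.inl with hx₁def
    set x₂ : Fin n₂ → ℂ := x ∘ Sum.inr with hx₂def
    have hsplit : x = Sum.elim x₁ x₂ := funext fun i => by cases i <;> rfl
    rw [hblock, fromBlocks_mulVec] at h₁
    simp only [zero_mulVec, zero_add] at h₁
    have e1 : (l • 1 - P₁) *ᵥ x₁ + (-(Q₁ * R₂)) *ᵥ x₂ = 0 :=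
      funext fun i => congrFun h₁ (Sum.inl i)
    have e2 : (l • 1 - P₂) *ᵥ x₂ = 0 := funext fun i => congrFun h₁ (Sum.inr i)
    rw [hsplit, fromCols_mulVec_sumElim] at h₂
    by_cases heig2 : IsEigenvalue P₂ l
    · have hN : (l • (1 : Matrix (Fin n₁) (Fin n₁) ℂ) - P₁).det ≠ 0 := by
        intro h; exact hdisj l hl ⟨h, heig2⟩
      have hu : IsUnit (l • (1 : Matrix (Fin n₁) (Fin n₁) ℂ) - P₁).det :=
        isUnit_iff_ne_zero.mpr hN
      set N := l • (1 : Matrix (Fin n₁) (Fin n₁) ℂ) - P₁ with hNdef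
      set u : Fin k → ℂ := R₂ *ᵥ x₂ with hudef
      have e1' : N *ᵥ x₁ = Q₁ *ᵥ u := by
        rw [neg_mulVec, add_neg_eq_zero] at e1
        rw [e1, hudef, mulVec_mulVec]
      have hx₁val : x₁ = (N⁻¹ * Q₁) *ᵥ u := by
        calc x₁ = (N⁻¹ * N) *ᵥ x₁ := by rw [Matrix.nonsing_inv_mul _ hu, one_mulVec]
          _ = N⁻¹ *ᵥ (N *ᵥ x₁) := by rw [mulVec_mulVec]
          _ = N⁻¹ *ᵥ (Q₁ *ᵥ u) := by rw [e1']
          _ = (N⁻¹ * Q₁) *ᵥ u := by rw [mulVec_mulVec]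
      have hu0 : (R₁ * N⁻¹ * Q₁ + S₁) *ᵥ u = 0 := by
        rw [add_mulVec]
        have t1 : R₁ *ᵥ x₁ = (R₁ * N⁻¹ * Q₁) *ᵥ u := by
          rw [hx₁val, mulVec_mulVec, ← Matrix.mul_assoc]
        have t2 : (S₁ * R₂) *ᵥ x₂ = S₁ *ᵥ u := by rw [hudef, mulVec_mulVec]
        rw [t1, t2] at h₂
        exact h₂
      have hu' : u = 0 := aux_mulVec_ker _ (hK₁rank l hl heig2) hu0
      have hx₂0 : x₂ = 0 := hdet₂ l hl x₂ e2 hu'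
      have hx₁0 : x₁ = 0 := by rw [hx₁val, hu', mulVec_zero]
      funext i
      cases i with
      | inl i => exact congrFun hx₁0 i
      | inr i => exact congrFun hx₂0 i
    · have hM : (l • (1 : Matrix (Fin n₂) (Fin n₂) ℂ) - P₂).det ≠ 0 := heig2
      have hx₂0 : x₂ = 0 := aux_mulVec_inv hM e2
      rw [hx₂0, mulVec_zero, add_zero] at e1 h₂
      have hx₁0 : x₁ = 0 := hdet₁ l hl x₁ e1 h₂
      funext i
      cases i with
      | inl i => exact congrFun hx₁0 i
      | inr i => exact congrFun hx₂0 i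
end

section
/- Let p ≥ 1 and let N, D be p×p matrices over the field ℂ(z) of rational functions such that: every entry of N and of D lies in rational H∞(𝔼₁); det D is not strictly proper; N and D are left coprime over rational H∞(𝔼₁), i.e., there exist p×p matrices X, Y₀ over ℂ(z) with all entries in rational H∞(𝔼₁) such that N·X + D·Y₀ = I; the zeros of det D in {z ∈ ℂ : |z| ≥ 1} are χ₁, …, χ_Υ, each a simple zero of det D; and for each r ∈ {1,…,Υ}, ψ_r ∈ ℂ^p is a nonzero vector with kernel of D(χ_r)* equal to {αψ_r : α ∈ ℂ}. Then for every p×p matrix Y over ℂ(z) with all entries in rational H∞(𝔼₁), the following are equivalent: (i) every entry of Y is strictly proper and there exists a p×p matrix Z over ℂ(z) with all entries in rational H∞(𝔼₁) such that N·Y + D·Z = I; (ii) every entry of Y is strictly proper and ψ_r*·N(χ_r)·Y(χ_r) = ψ_r* for all r ∈ {1,…,Υ}. Moreover, if (ii) holds, then the matrix Z := (det D)⁻¹·(adj D − adj D·N·Y), computed in matrices over ℂ(z), has all entries in rational H∞(𝔼₁) and satisfies N·Y + D·Z = I. -/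
open Matrix Polynomial

set_option synthInstance.maxHeartbeats 1000000

/-- Entrywise evaluation of a matrix of rational functions at a point. -/
noncomputable def evalRM {p q : ℕ} (M : Matrix (Fin p) (Fin q) (RatFunc ℂ)) (z : ℂ) :
    Matrix (Fin p) (Fin q) ℂ :=
  Matrix.of fun i j => RatFunc.eval (RingHom.id ℂ) z (M i j)

/-- `f` is proper: numerator degree ≤ denominator degree (in lowest terms). -/
def Proper (f : RatFunc ℂ) : Prop := f.num.degree ≤ f.denom.degree

/-- `f` is strictly proper: numerator degree < denominator degree (in lowest terms). -/
def StrictlyProper (f : RatFunc ℂ) : Prop := f.num.degree < f.denom.degree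

/-- `f` belongs to rational `H∞(𝔼₁)`: it is proper and has no pole in `{z : |z| ≥ 1}`. -/
def MemRHinf (f : RatFunc ℂ) : Prop :=
  Proper f ∧ ∀ z : ℂ, 1 ≤ ‖z‖ → Polynomial.eval z f.denom ≠ 0

/-- `χ` is a simple zero of `f`: `f = (z − χ)·h` with `h` having no pole at `χ` and `h(χ) ≠ 0`. -/
def SimpleZero (f : RatFunc ℂ) (χ : ℂ) : Prop :=
  ∃ h : RatFunc ℂ, f = (RatFunc.X - RatFunc.C χ) * h ∧
    Polynomial.eval χ h.denom ≠ 0 ∧ RatFunc.eval (RingHom.id ℂ) χ h ≠ 0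

set_option maxHeartbeats 1000000

/-! ### Properness -/

lemma proper_of_intDegree {f : RatFunc ℂ} (h : f.intDegree ≤ 0) : Proper f := by
  by_cases hf : f = 0
  · simp [Proper, hf, RatFunc.num_zero]
  · unfold Proper
    rw [Polynomial.degree_eq_natDegree (RatFunc.num_ne_zero hf),
      Polynomial.degree_eq_natDegree f.denom_ne_zero, Nat.cast_le]
    unfold RatFunc.intDegree at h
    omega

lemma intDegree_nonpos_of_proper {f : RatFunc ℂ} (h : Proper f) : f.intDegree ≤ 0 := by
  by_cases hf : f = 0
  · simp [hf]
  · unfold Proper at h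
    rw [Polynomial.degree_eq_natDegree (RatFunc.num_ne_zero hf),
      Polynomial.degree_eq_natDegree f.denom_ne_zero, Nat.cast_le] at h
    unfold RatFunc.intDegree
    omega

lemma proper_zero : Proper 0 := proper_of_intDegree (by simp)

lemma proper_add {f g : RatFunc ℂ} (hf : Proper f) (hg : Proper g) : Proper (f + g) := by
  by_cases hfg : f + g = 0
  · rw [hfg]; exact proper_zero
  by_cases hg0 : g = 0
  · simpa [hg0] using hf
  apply proper_of_intDegree
  refine le_trans (RatFunc.intDegree_add_le hg0 hfg) ?_
  exact max_le (intDegree_nonpos_of_proper hf) (intDegree_nonpos_of_proper hg)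

lemma proper_mul {f g : RatFunc ℂ} (hf : Proper f) (hg : Proper g) : Proper (f * g) := by
  by_cases hf0 : f = 0
  · simp [hf0, proper_zero]
  by_cases hg0 : g = 0
  · simp [hg0, proper_zero]
  apply proper_of_intDegree
  rw [RatFunc.intDegree_mul hf0 hg0]
  have := intDegree_nonpos_of_proper hf
  have := intDegree_nonpos_of_proper hg
  omega

lemma proper_neg {f : RatFunc ℂ} (hf : Proper f) : Proper (-f) :=
  proper_of_intDegree (by rw [RatFunc.intDegree_neg]; exact intDegree_nonpos_of_proper hf)

/-- The subring of proper rational functions. -/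
noncomputable def properSub : Subring (RatFunc ℂ) where
  carrier := {f | Proper f}
  mul_mem' := proper_mul
  one_mem' := proper_of_intDegree (by simp [RatFunc.intDegree_one])
  add_mem' := proper_add
  zero_mem' := proper_zero
  neg_mem' := proper_neg

lemma mem_properSub {f : RatFunc ℂ} : f ∈ properSub ↔ Proper f := Iff.rfl

/-! ### No-pole subring and evaluation homomorphism -/

lemma stable_dvd_aux {f : RatFunc ℂ} {z : ℂ} {q : ℂ[X]}
    (hdvd : f.denom ∣ q) (hq : Polynomial.eval z q ≠ 0) :
    Polynomial.eval z f.denom ≠ 0 := by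
  obtain ⟨c, rfl⟩ := hdvd
  rw [Polynomial.eval_mul] at hq
  exact fun h => hq (by rw [h, zero_mul])

/-- The subring of rational functions with no pole at `z`. -/
noncomputable def stableSub (z : ℂ) : Subring (RatFunc ℂ) where
  carrier := {f | Polynomial.eval z f.denom ≠ 0}
  mul_mem' {a b} ha hb :=
    stable_dvd_aux (RatFunc.denom_mul_dvd a b) (by simpa [Polynomial.eval_mul] using mul_ne_zero ha hb)
  one_mem' := by simp [Set.mem_setOf_eq, RatFunc.denom_one]
  add_mem' {a b} ha hb :=
    stable_dvd_aux (RatFunc.denom_add_dvd a b) (by simpa [Polynomial.eval_mul] using mul_ne_zero ha hb)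
  zero_mem' := by simp [Set.mem_setOf_eq, RatFunc.denom_zero]
  neg_mem' {a} ha := by
    have h1 : ((-1 : RatFunc ℂ)) = algebraMap ℂ[X] (RatFunc ℂ) (-1) := by simp
    have hd : (-a).denom ∣ (-1 : RatFunc ℂ).denom * a.denom := by
      simpa using RatFunc.denom_mul_dvd (-1) a
    refine stable_dvd_aux hd ?_
    have : (-1 : RatFunc ℂ).denom = 1 := by rw [h1, RatFunc.denom_algebraMap]
    simpa [this] using ha

lemma mem_stableSub {z : ℂ} {f : RatFunc ℂ} :
    f ∈ stableSub z ↔ Polynomial.eval z f.denom ≠ 0 := Iff.rfl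

lemma eval₂_id_eq_eval {z : ℂ} (q : ℂ[X]) :
    Polynomial.eval₂ (RingHom.id ℂ) z q = Polynomial.eval z q := rfl

/-- Evaluation at `z` as a ring hom on the subring of functions with no pole at `z`. -/
noncomputable def evalHom (z : ℂ) : stableSub z →+* ℂ where
  toFun f := RatFunc.eval (RingHom.id ℂ) z f.1
  map_one' := RatFunc.eval_one _ _
  map_mul' a b := RatFunc.eval_mul (f := RingHom.id ℂ) (a := z) a.2 b.2
  map_zero' := RatFunc.eval_zero _ _
  map_add' a b := RatFunc.eval_add (f := RingHom.id ℂ) (a := z) a.2 b.2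

lemma evalHom_apply {z : ℂ} (f : stableSub z) :
    evalHom z f = RatFunc.eval (RingHom.id ℂ) z f.1 := rfl

/-! ### Matrices over a subring -/

section MatSub

variable {R : Type*} [CommRing R] {n : ℕ} (S : Subring R)

/-- Lift a matrix with entries in a subring. -/
def mlift (A : Matrix (Fin n) (Fin n) R) (h : ∀ i j, A i j ∈ S) : Matrix (Fin n) (Fin n) S :=
  Matrix.of fun i j => ⟨A i j, h i j⟩

lemma mlift_map (A : Matrix (Fin n) (Fin n) R) (h : ∀ i j, A i j ∈ S) :
    (mlift S A h).map S.subtype = A := rfl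

lemma mlift_eq {A : Matrix (Fin n) (Fin n) R} {h : ∀ i j, A i j ∈ S}
    {B : Matrix (Fin n) (Fin n) S} (hB : B.map S.subtype = A) : mlift S A h = B := by
  ext i j
  show A i j = (B.map S.subtype) i j
  exact (congrFun (congrFun hB i) j).symm

lemma det_mem (A : Matrix (Fin n) (Fin n) R) (h : ∀ i j, A i j ∈ S) : A.det ∈ S := by
  have : A.det = S.subtype (mlift S A h).det := by
    rw [RingHom.map_det, RingHom.mapMatrix_apply, mlift_map]
  rw [this]
  exact SetLike.coe_mem _

lemma adjugate_mem (A : Matrix (Fin n) (Fin n) R) (h : ∀ i j, A i j ∈ S) :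
    ∀ i j, A.adjugate i j ∈ S := by
  intro i j
  have : A.adjugate = ((mlift S A h).adjugate).map S.subtype := by
    rw [← RingHom.mapMatrix_apply, RingHom.map_adjugate, RingHom.mapMatrix_apply, mlift_map]
  rw [this]
  exact SetLike.coe_mem _

lemma mul_entries_mem {A B : Matrix (Fin n) (Fin n) R} (hA : ∀ i j, A i j ∈ S)
    (hB : ∀ i j, B i j ∈ S) : ∀ i j, (A * B) i j ∈ S := by
  intro i j
  rw [Matrix.mul_apply]
  exact Subring.sum_mem _ fun k _ => S.mul_mem (hA i k) (hB k j)

lemma sub_entries_mem {A B : Matrix (Fin n) (Fin n) R} (hA : ∀ i j, A i j ∈ S)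
    (hB : ∀ i j, B i j ∈ S) : ∀ i j, (A - B) i j ∈ S := fun i j => by
  have : (A - B) i j = A i j - B i j := rfl
  rw [this]; exact S.sub_mem (hA i j) (hB i j)

lemma one_entries_mem : ∀ i j, (1 : Matrix (Fin n) (Fin n) R) i j ∈ S := by
  intro i j
  rw [Matrix.one_apply]
  split_ifs
  · exact S.one_mem
  · exact S.zero_mem

lemma mlift_mul {A B : Matrix (Fin n) (Fin n) R} (hA : ∀ i j, A i j ∈ S)
    (hB : ∀ i j, B i j ∈ S) :
    mlift S (A * B) (mul_entries_mem S hA hB) = mlift S A hA * mlift S B hB :=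
  mlift_eq S (by rw [Matrix.map_mul (f := S.subtype), mlift_map, mlift_map])

lemma mlift_sub {A B : Matrix (Fin n) (Fin n) R} (hA : ∀ i j, A i j ∈ S)
    (hB : ∀ i j, B i j ∈ S) :
    mlift S (A - B) (sub_entries_mem S hA hB) = mlift S A hA - mlift S B hB :=
  mlift_eq S (by
    rw [Matrix.map_sub S.subtype (fun a b => by simp) , mlift_map, mlift_map])

lemma mlift_adjugate {A : Matrix (Fin n) (Fin n) R} (hA : ∀ i j, A i j ∈ S) :
    mlift S A.adjugate (adjugate_mem S A hA) = (mlift S A hA).adjugate :=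
  mlift_eq S (by
    rw [← RingHom.mapMatrix_apply, RingHom.map_adjugate, RingHom.mapMatrix_apply, mlift_map])

end MatSub

/-! ### evalRM as a homomorphism -/

section EvalRM

variable {n : ℕ} {z : ℂ}

lemma evalRM_eq_map (A : Matrix (Fin n) (Fin n) (RatFunc ℂ)) (h : ∀ i j, A i j ∈ stableSub z) :
    evalRM A z = (mlift (stableSub z) A h).map (evalHom z) := rfl

lemma evalRM_mul {A B : Matrix (Fin n) (Fin n) (RatFunc ℂ)} (hA : ∀ i j, A i j ∈ stableSub z)
    (hB : ∀ i j, B i j ∈ stableSub z) :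
    evalRM (A * B) z = evalRM A z * evalRM B z := by
  rw [evalRM_eq_map (A * B) (mul_entries_mem _ hA hB), evalRM_eq_map A hA, evalRM_eq_map B hB,
    mlift_mul, Matrix.map_mul (f := evalHom z)]

lemma evalRM_sub {A B : Matrix (Fin n) (Fin n) (RatFunc ℂ)} (hA : ∀ i j, A i j ∈ stableSub z)
    (hB : ∀ i j, B i j ∈ stableSub z) :
    evalRM (A - B) z = evalRM A z - evalRM B z := by
  rw [evalRM_eq_map (A - B) (sub_entries_mem _ hA hB), evalRM_eq_map A hA, evalRM_eq_map B hB,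
    mlift_sub, Matrix.map_sub (evalHom z) (fun a b => by simp)]

lemma evalRM_one : evalRM (1 : Matrix (Fin n) (Fin n) (RatFunc ℂ)) z = 1 := by
  rw [evalRM_eq_map 1 (one_entries_mem _)]
  rw [mlift_eq (stableSub z) (B := 1) (by simp [Matrix.map_one])]
  simp [Matrix.map_one]

lemma evalRM_adjugate {A : Matrix (Fin n) (Fin n) (RatFunc ℂ)}
    (hA : ∀ i j, A i j ∈ stableSub z) :
    evalRM A.adjugate z = (evalRM A z).adjugate := by
  rw [evalRM_eq_map A.adjugate (adjugate_mem _ A hA), evalRM_eq_map A hA, mlift_adjugate,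
    ← RingHom.mapMatrix_apply, ← RingHom.mapMatrix_apply, RingHom.map_adjugate]

lemma evalRM_det {A : Matrix (Fin n) (Fin n) (RatFunc ℂ)} (hA : ∀ i j, A i j ∈ stableSub z) :
    RatFunc.eval (RingHom.id ℂ) z A.det = (evalRM A z).det := by
  have h1 : A.det = (stableSub z).subtype (mlift (stableSub z) A hA).det := by
    rw [RingHom.map_det, RingHom.mapMatrix_apply, mlift_map]
  have h2 : RatFunc.eval (RingHom.id ℂ) z A.det = evalHom z (mlift (stableSub z) A hA).det := by
    rw [evalHom_apply]; exact congrArg _ h1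
  rw [h2, RingHom.map_det, RingHom.mapMatrix_apply, evalRM_eq_map A hA]

lemma evalRM_apply {pp qq : ℕ} (A : Matrix (Fin pp) (Fin qq) (RatFunc ℂ)) (i j) :
    evalRM A z i j = RatFunc.eval (RingHom.id ℂ) z (A i j) := rfl

end EvalRM

/-! ### Pole-related helper lemmas -/

lemma eval_eq_div (z : ℂ) (f : RatFunc ℂ) :
    RatFunc.eval (RingHom.id ℂ) z f = Polynomial.eval z f.num / Polynomial.eval z f.denom := rfl

lemma num_eval_ne_zero {f : RatFunc ℂ} {z : ℂ} (h : RatFunc.eval (RingHom.id ℂ) z f ≠ 0) :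
    Polynomial.eval z f.num ≠ 0 := by
  intro h0
  exact h (by rw [eval_eq_div, h0, zero_div])

lemma num_eval_eq_zero {f : RatFunc ℂ} {z : ℂ} (hf : f ∈ stableSub z)
    (h : RatFunc.eval (RingHom.id ℂ) z f = 0) : Polynomial.eval z f.num = 0 := by
  rw [eval_eq_div] at h
  rcases div_eq_zero_iff.mp h with h1 | h1
  · exact h1
  · exact absurd h1 hf

lemma inv_mem_stable {f : RatFunc ℂ} {z : ℂ} (h : Polynomial.eval z f.num ≠ 0) :
    f⁻¹ ∈ stableSub z := by
  by_cases hf : f = 0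
  · rw [hf, RatFunc.num_zero] at h; simp at h
  have hrepr : f⁻¹ = algebraMap ℂ[X] (RatFunc ℂ) f.denom / algebraMap ℂ[X] (RatFunc ℂ) f.num := by
    conv_lhs => rw [← RatFunc.num_div_denom f]
    rw [inv_div]
  have hdvd : (f⁻¹).denom ∣ f.num := by
    rw [hrepr]; exact RatFunc.denom_div_dvd f.denom f.num
  exact stable_dvd_aux hdvd h

lemma div_root_mem {f : RatFunc ℂ} {χ : ℂ} (hf : f ∈ stableSub χ)
    (h0 : RatFunc.eval (RingHom.id ℂ) χ f = 0) :
    (RatFunc.X - RatFunc.C χ)⁻¹ * f ∈ stableSub χ := by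
  have hnum : Polynomial.eval χ f.num = 0 := num_eval_eq_zero hf h0
  obtain ⟨q, hq⟩ := (Polynomial.dvd_iff_isRoot.mpr hnum : (X - C χ) ∣ f.num)
  have hXC : (RatFunc.X - RatFunc.C χ : RatFunc ℂ) = algebraMap ℂ[X] (RatFunc ℂ) (X - C χ) := by
    rw [map_sub, RatFunc.algebraMap_X, RatFunc.algebraMap_C]
  have hne : algebraMap ℂ[X] (RatFunc ℂ) (X - C χ) ≠ 0 :=
    RatFunc.algebraMap_ne_zero (Polynomial.X_sub_C_ne_zero χ)
  have hrepr : (RatFunc.X - RatFunc.C χ)⁻¹ * f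
      = algebraMap ℂ[X] (RatFunc ℂ) q / algebraMap ℂ[X] (RatFunc ℂ) f.denom := by
    conv_lhs => rw [← RatFunc.num_div_denom f]
    rw [hq, _root_.map_mul, hXC, mul_div_assoc, inv_mul_cancel_left₀ hne]
  have hdvd : ((RatFunc.X - RatFunc.C χ)⁻¹ * f).denom ∣ f.denom := by
    rw [hrepr]; exact RatFunc.denom_div_dvd q f.denom
  exact stable_dvd_aux hdvd hf

/-! ### more infra: add -/

section MatSub2
variable {R : Type*} [CommRing R] {n : ℕ} (S : Subring R)

lemma add_entries_mem {A B : Matrix (Fin n) (Fin n) R} (hA : ∀ i j, A i j ∈ S)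
    (hB : ∀ i j, B i j ∈ S) : ∀ i j, (A + B) i j ∈ S := fun i j => by
  have : (A + B) i j = A i j + B i j := rfl
  rw [this]; exact S.add_mem (hA i j) (hB i j)

lemma mlift_add {A B : Matrix (Fin n) (Fin n) R} (hA : ∀ i j, A i j ∈ S)
    (hB : ∀ i j, B i j ∈ S) :
    mlift S (A + B) (add_entries_mem S hA hB) = mlift S A hA + mlift S B hB :=
  mlift_eq S (by
    rw [Matrix.map_add S.subtype (fun a b => by simp), mlift_map, mlift_map])

end MatSub2

lemma evalRM_add {n : ℕ} {z : ℂ} {A B : Matrix (Fin n) (Fin n) (RatFunc ℂ)}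
    (hA : ∀ i j, A i j ∈ stableSub z) (hB : ∀ i j, B i j ∈ stableSub z) :
    evalRM (A + B) z = evalRM A z + evalRM B z := by
  rw [evalRM_eq_map (A + B) (add_entries_mem _ hA hB), evalRM_eq_map A hA, evalRM_eq_map B hB,
    mlift_add, Matrix.map_add (evalHom z) (fun a b => by simp)]

/-! ### Row kernel lemma -/

lemma row_kernel_entry {p : ℕ} (A B Dm : Matrix (Fin p) (Fin p) ℂ) (ψv : Fin p → ℂ)
    (hAD : A * Dm = 0)
    (hker : LinearMap.ker (Dm.conjTranspose.mulVecLin) = Submodule.span ℂ {ψv})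
    (hint : Matrix.vecMul (star ψv) B = star ψv) :
    A - A * B = 0 := by
  ext i j
  have hvD : Matrix.vecMul (fun k => A i k) Dm = 0 := by
    funext l
    have h := congrFun (congrFun hAD i) l
    simpa [Matrix.mul_apply, Matrix.vecMul, dotProduct] using h
  have hker2 : star (fun k => A i k) ∈ LinearMap.ker (Dm.conjTranspose.mulVecLin) := by
    rw [LinearMap.mem_ker, Matrix.mulVecLin_apply]
    have h := congrArg star hvD
    rw [Matrix.star_vecMul] at h
    simpa using h
  rw [hker, Submodule.mem_span_singleton] at hker2
  obtain ⟨a, ha⟩ := hker2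
  have hv : (fun k => A i k) = star a • star ψv := by
    have h := congrArg star ha
    rw [star_smul, star_star] at h
    exact h.symm
  have hrow : Matrix.vecMul (fun k => A i k) B = fun k => A i k := by
    rw [hv, Matrix.smul_vecMul, hint]
  have hj := congrFun hrow j
  have hAB : (A * B) i j = A i j := by
    rw [Matrix.mul_apply]
    simpa [Matrix.vecMul, dotProduct] using hj
  simp [Matrix.sub_apply, hAB]

/-- Characterization of strictly proper solutions `Y` of the Bézout identity `N·Y + D·Z = I`
over rational `H∞(𝔼₁)` by interpolation conditions at the unstable zeros of `det D`. -/
theorem stmt5 {p Υ : ℕ} (hp : 1 ≤ p)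
    (N D : Matrix (Fin p) (Fin p) (RatFunc ℂ))
    (hN : ∀ i j, MemRHinf (N i j)) (hD : ∀ i j, MemRHinf (D i j))
    (hdetD : ¬ StrictlyProper D.det)
    (hcoprime : ∃ X₀ Y₀ : Matrix (Fin p) (Fin p) (RatFunc ℂ),
      (∀ i j, MemRHinf (X₀ i j)) ∧ (∀ i j, MemRHinf (Y₀ i j)) ∧ N * X₀ + D * Y₀ = 1)
    (χ : Fin Υ → ℂ) (hχinj : Function.Injective χ)
    (hχreg : ∀ r, 1 ≤ ‖χ r‖)
    (hχsimple : ∀ r, SimpleZero D.det (χ r))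
    (hχall : ∀ z : ℂ, 1 ≤ ‖z‖ →
      (RatFunc.eval (RingHom.id ℂ) z D.det = 0 ↔ ∃ r, χ r = z))
    (ψ : Fin Υ → Fin p → ℂ) (hψne : ∀ r, ψ r ≠ 0)
    (hψker : ∀ r, LinearMap.ker ((evalRM D (χ r)).conjTranspose.mulVecLin) =
      Submodule.span ℂ {ψ r}) :
    ∀ Y : Matrix (Fin p) (Fin p) (RatFunc ℂ), (∀ i j, MemRHinf (Y i j)) →
      ((((∀ i j, StrictlyProper (Y i j)) ∧
          ∃ Z : Matrix (Fin p) (Fin p) (RatFunc ℂ),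
            (∀ i j, MemRHinf (Z i j)) ∧ N * Y + D * Z = 1) ↔
        ((∀ i j, StrictlyProper (Y i j)) ∧
          ∀ r, vecMul (star (ψ r)) (evalRM N (χ r) * evalRM Y (χ r)) = star (ψ r))) ∧
      (((∀ i j, StrictlyProper (Y i j)) ∧
          ∀ r, vecMul (star (ψ r)) (evalRM N (χ r) * evalRM Y (χ r)) = star (ψ r)) →
        (∀ i j, MemRHinf (((D.det)⁻¹ • (D.adjugate - D.adjugate * N * Y)) i j)) ∧
        N * Y + D * ((D.det)⁻¹ • (D.adjugate - D.adjugate * N * Y)) = 1)) := by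
  classical
  have hdet0 : D.det ≠ 0 := by
    intro h
    apply hdetD
    rw [h]
    unfold StrictlyProper
    rw [RatFunc.num_zero, RatFunc.denom_zero]
    simp
  have hdetProper : Proper D.det := det_mem properSub D (fun i j => (hD i j).1)
  have hinvProper : Proper (D.det⁻¹) := by
    have hge : (0 : ℤ) ≤ D.det.intDegree := by
      by_contra hlt
      push_neg at hlt
      apply hdetD
      unfold StrictlyProper
      rw [Polynomial.degree_eq_natDegree (RatFunc.num_ne_zero hdet0),
        Polynomial.degree_eq_natDegree D.det.denom_ne_zero, Nat.cast_lt]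
      unfold RatFunc.intDegree at hlt
      omega
    apply proper_of_intDegree
    have h1 : D.det * D.det⁻¹ = 1 := mul_inv_cancel₀ hdet0
    have h2 := RatFunc.intDegree_mul hdet0 (inv_ne_zero hdet0)
    rw [h1, RatFunc.intDegree_one] at h2
    have := intDegree_nonpos_of_proper hdetProper
    omega
  intro Y hYmem
  set M : Matrix (Fin p) (Fin p) (RatFunc ℂ) := D.adjugate - D.adjugate * N * Y with hM
  have hMproper : ∀ i j, M i j ∈ properSub :=
    sub_entries_mem _ (adjugate_mem _ D fun i j => (hD i j).1)
      (mul_entries_mem _ (mul_entries_mem _ (adjugate_mem _ D fun i j => (hD i j).1)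
        (fun i j => (hN i j).1)) (fun i j => (hYmem i j).1))
  have hMstable : ∀ z : ℂ, 1 ≤ ‖z‖ → ∀ i j, M i j ∈ stableSub z := fun z hz =>
    sub_entries_mem _ (adjugate_mem _ D fun i j => (hD i j).2 z hz)
      (mul_entries_mem _ (mul_entries_mem _ (adjugate_mem _ D fun i j => (hD i j).2 z hz)
        (fun i j => (hN i j).2 z hz)) (fun i j => (hYmem i j).2 z hz))
  have hZentry : ∀ i j, ((D.det)⁻¹ • M) i j = D.det⁻¹ * M i j := fun i j => by
    simp [Matrix.smul_apply, smul_eq_mul]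
  have key : ((∀ i j, StrictlyProper (Y i j)) ∧
      ∀ r, vecMul (star (ψ r)) (evalRM N (χ r) * evalRM Y (χ r)) = star (ψ r)) →
      (∀ i j, MemRHinf (((D.det)⁻¹ • M) i j)) ∧
        N * Y + D * ((D.det)⁻¹ • M) = 1 := by
    rintro ⟨hYsp, hint⟩
    have hMzero : ∀ r i j, RatFunc.eval (RingHom.id ℂ) (χ r) (M i j) = 0 := by
      intro r i j
      have hz := hχreg r
      have hDs : ∀ i j, D i j ∈ stableSub (χ r) := fun i j => (hD i j).2 _ hz
      have hNs : ∀ i j, N i j ∈ stableSub (χ r) := fun i j => (hN i j).2 _ hz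
      have hYs : ∀ i j, Y i j ∈ stableSub (χ r) := fun i j => (hYmem i j).2 _ hz
      have hadj : ∀ i j, D.adjugate i j ∈ stableSub (χ r) := adjugate_mem _ D hDs
      have heval : evalRM M (χ r) =
          (evalRM D (χ r)).adjugate -
            (evalRM D (χ r)).adjugate * (evalRM N (χ r) * evalRM Y (χ r)) := by
        rw [hM, evalRM_sub hadj (mul_entries_mem _ (mul_entries_mem _ hadj hNs) hYs),
          evalRM_mul (mul_entries_mem _ hadj hNs) hYs, evalRM_mul hadj hNs,
          evalRM_adjugate hDs, Matrix.mul_assoc]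
      have hdetχ : (evalRM D (χ r)).det = 0 := by
        rw [← evalRM_det hDs]
        exact (hχall (χ r) hz).mpr ⟨r, rfl⟩
      have hadjD : (evalRM D (χ r)).adjugate * evalRM D (χ r) = 0 := by
        rw [Matrix.adjugate_mul, hdetχ, zero_smul]
      have hzero : evalRM M (χ r) = 0 := by
        rw [heval]
        exact row_kernel_entry _ _ _ _ hadjD (hψker r) (hint r)
      have := congrFun (congrFun hzero i) j
      simpa [evalRM_apply] using this
    constructor
    · intro i j
      rw [hZentry i j]
      constructor
      · exact properSub.mul_mem hinvProper (hMproper i j)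
      · intro z hz
        have hMz := hMstable z hz i j
        by_cases hzχ : ∃ r, χ r = z
        · obtain ⟨r, rfl⟩ := hzχ
          obtain ⟨h, hfac, hden, hval⟩ := hχsimple r
          have hinvh : h⁻¹ ∈ stableSub (χ r) := inv_mem_stable (num_eval_ne_zero hval)
          have hsplit : D.det⁻¹ * M i j
              = h⁻¹ * ((RatFunc.X - RatFunc.C (χ r))⁻¹ * M i j) := by
            rw [hfac, _root_.mul_inv_rev]
            ring
          rw [hsplit]
          exact (stableSub (χ r)).mul_mem hinvh (div_root_mem hMz (hMzero r i j))
        · have hdetz : RatFunc.eval (RingHom.id ℂ) z D.det ≠ 0 := fun h0 =>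
            hzχ ((hχall z hz).mp h0)
          exact (stableSub z).mul_mem (inv_mem_stable (num_eval_ne_zero hdetz)) hMz
    · have h1 : D * M = D.det • 1 - D.det • (N * Y) := by
        rw [hM, Matrix.mul_sub, Matrix.mul_adjugate, ← Matrix.mul_assoc, ← Matrix.mul_assoc,
          Matrix.mul_adjugate, Matrix.smul_mul, Matrix.smul_mul, Matrix.one_mul]
      have h2 : D * ((D.det)⁻¹ • M) = 1 - N * Y := by
        rw [Matrix.mul_smul, h1, smul_sub, smul_smul, smul_smul, inv_mul_cancel₀ hdet0,
          one_smul, one_smul]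
      rw [h2]
      abel
  refine ⟨⟨?_, fun hh => ⟨hh.1, _, (key hh).1, (key hh).2⟩⟩, key⟩
  rintro ⟨hsp, Z, hZmem, hZeq⟩
  refine ⟨hsp, fun r => ?_⟩
  have hz := hχreg r
  have hDs : ∀ i j, D i j ∈ stableSub (χ r) := fun i j => (hD i j).2 _ hz
  have hNs : ∀ i j, N i j ∈ stableSub (χ r) := fun i j => (hN i j).2 _ hz
  have hYs : ∀ i j, Y i j ∈ stableSub (χ r) := fun i j => (hYmem i j).2 _ hz
  have hZs : ∀ i j, Z i j ∈ stableSub (χ r) := fun i j => (hZmem i j).2 _ hz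
  have heq : evalRM N (χ r) * evalRM Y (χ r) + evalRM D (χ r) * evalRM Z (χ r) = 1 := by
    rw [← evalRM_mul hNs hYs, ← evalRM_mul hDs hZs,
      ← evalRM_add (mul_entries_mem _ hNs hYs) (mul_entries_mem _ hDs hZs), hZeq, evalRM_one]
  have hψD : Matrix.vecMul (star (ψ r)) (evalRM D (χ r)) = 0 := by
    have hmem : ψ r ∈ LinearMap.ker ((evalRM D (χ r)).conjTranspose.mulVecLin) := by
      rw [hψker r]
      exact Submodule.mem_span_singleton_self _
    rw [LinearMap.mem_ker, Matrix.mulVecLin_apply] at hmem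
    have h := congrArg star hmem
    rw [Matrix.star_mulVec, Matrix.conjTranspose_conjTranspose] at h
    simpa using h
  have hfin := congrArg (fun Mm => Matrix.vecMul (star (ψ r)) Mm) heq
  simp only [Matrix.vecMul_add, ← Matrix.vecMul_vecMul, hψD, Matrix.zero_vecMul,
    Matrix.vecMul_one, add_zero] at hfin
  rwa [Matrix.vecMul_vecMul] at hfin
end

section
/- Let p ≥ 1 and λ ∈ ℂ. Let N, D, R, Y, Z : ℂ → ℂ^{p×p} be matrix-valued functions that are complex-differentiable at λ (entrywise), and suppose N(z)·Y(z) + D(z)·Z(z) = I for all z in some neighborhood of λ. Set H := N + D·R (pointwise), and suppose that D(λ) and H(λ) are invertible, that Y(λ) = H(λ)⁻¹, and that Y′(λ) = −H(λ)⁻¹·(D(λ) + H′(λ)·H(λ)⁻¹), where H′(λ) denotes the derivative of z ↦ N(z) + D(z)·R(z) at λ. Then (Z − R·Y)(λ) = 0 and the derivative of z ↦ Z(z) − R(z)·Y(z) at λ equals the identity matrix I. -/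
open scoped Matrix.Norms.L2Operator

/-- If `N·Y + D·Z = I` near `λ`, `D(λ)` and `H(λ) := N(λ) + D(λ)R(λ)` are invertible,
`Y(λ) = H(λ)⁻¹` and `Y′(λ) = −H(λ)⁻¹(D(λ) + H′(λ)H(λ)⁻¹)`, then `(Z − R·Y)(λ) = 0` and
`(Z − R·Y)′(λ) = I`. -/
theorem stmt7 {p : ℕ} (hp : 1 ≤ p) (lam : ℂ)
    (N D R Y Z : ℂ → Matrix (Fin p) (Fin p) ℂ)
    (hN : DifferentiableAt ℂ N lam) (hD : DifferentiableAt ℂ D lam)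
    (hR : DifferentiableAt ℂ R lam) (hY : DifferentiableAt ℂ Y lam)
    (hZ : DifferentiableAt ℂ Z lam)
    (hBez : ∀ᶠ z in nhds lam, N z * Y z + D z * Z z = 1)
    (hDinv : IsUnit (D lam))
    (hHinv : IsUnit (N lam + D lam * R lam))
    (hYlam : Y lam = (N lam + D lam * R lam)⁻¹)
    (hY' : deriv Y lam =
      -((N lam + D lam * R lam)⁻¹ *
        (D lam + deriv (fun z => N z + D z * R z) lam * (N lam + D lam * R lam)⁻¹))) :
    (Z lam - R lam * Y lam = 0) ∧
    deriv (fun z => Z z - R z * Y z) lam = 1 := by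
  -- notation
  set n := N lam
  set d := D lam
  set r := R lam
  set y := Y lam
  set z := Z lam
  set n' := deriv N lam
  set d' := deriv D lam
  set r' := deriv R lam
  set y' := deriv Y lam
  set z' := deriv Z lam
  have hHdet : IsUnit (n + d * r).det := (Matrix.isUnit_iff_isUnit_det _).mp hHinv
  have hDdet : IsUnit d.det := (Matrix.isUnit_iff_isUnit_det _).mp hDinv
  have hHH : (n + d * r) * (n + d * r)⁻¹ = 1 := Matrix.mul_nonsing_inv _ hHdet
  -- Bezout at lam
  have hBez0 : n * y + d * z = 1 := hBez.self_of_nhds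
  -- Part 1
  have key1 : d * (z - r * y) = 0 := by
    have : d * (z - r * y) = (n * y + d * z) - (n + d * r) * y := by noncomm_ring
    rw [this, hBez0, hYlam, hHH, sub_self]
  have hZRY : z - r * y = 0 := hDinv.mul_left_cancel (by rw [key1, mul_zero])
  refine ⟨hZRY, ?_⟩
  have hzry : z = r * y := by
    have := sub_eq_zero.mp hZRY; exact this
  -- derivative of Bezout
  have hBezDeriv : n' * y + n * y' + (d' * z + d * z') = 0 := by
    have h1 : deriv (fun w => N w * Y w + D w * Z w) lam = 0 := by
      rw [Filter.EventuallyEq.deriv_eq hBez, deriv_const]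
    rw [deriv_fun_add (hN.fun_mul hY) (hD.fun_mul hZ), deriv_fun_mul hN hY, deriv_fun_mul hD hZ] at h1
    exact h1
  -- derivative of H
  have hHderiv : deriv (fun w => N w + D w * R w) lam = n' + (d' * r + d * r') := by
    rw [deriv_fun_add hN (hD.fun_mul hR), deriv_fun_mul hD hR]
  rw [hHderiv] at hY'
  -- express d * z'
  have e2 : d * z' = -(n' * y + n * y' + d' * z) := by
    have h0 : d * z' + (n' * y + n * y' + d' * z) = 0 := by
      rw [← hBezDeriv]; abel
    exact eq_neg_of_add_eq_zero_left h0
  -- derivative of goal function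
  have hgoalDeriv : deriv (fun w => Z w - R w * Y w) lam = z' - (r' * y + r * y') := by
    rw [deriv_fun_sub hZ (hR.fun_mul hY), deriv_fun_mul hR hY]
  rw [hgoalDeriv]
  -- main computation
  have key2 : d * (z' - (r' * y + r * y')) = d * 1 := by
    have stepA : d * (z' - (r' * y + r * y'))
        = -((n' + (d' * r + d * r')) * y) - (n + d * r) * y' := by
      have : d * (z' - (r' * y + r * y'))
          = d * z' - d * (r' * y) - d * (r * y') := by noncomm_ring
      rw [this, e2, hzry]; noncomm_ring
    rw [stepA, hYlam, hY']
    calc -((n' + (d' * r + d * r')) * (n + d * r)⁻¹) -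
          (n + d * r) * -((n + d * r)⁻¹ *
            (d + (n' + (d' * r + d * r')) * (n + d * r)⁻¹))
        = -((n' + (d' * r + d * r')) * (n + d * r)⁻¹) +
          ((n + d * r) * (n + d * r)⁻¹) *
            (d + (n' + (d' * r + d * r')) * (n + d * r)⁻¹) := by noncomm_ring
      _ = d * 1 := by rw [hHH]; noncomm_ring
  exact hDinv.mul_left_cancel key2
end

section
/- Define g : ℂ → ℂ by g(s) := s − 1/5 − (1/5)·exp(−s). Then there exists a real number γ > 0 such that g(γ) = 0, the complex derivative g′(γ) ≠ 0, and every s ∈ ℂ with Re(s) ≥ 0 and g(s) = 0 satisfies s = γ. In other words, g has exactly one zero in the closed right half-plane {s ∈ ℂ : Re(s) ≥ 0}, and this zero is real, positive, and simple. -/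
open Real

noncomputable def fre : ℝ → ℝ := fun x => x - 1/5 - (1/5) * Real.exp (-x)

lemma fre_hasDeriv (x : ℝ) : HasDerivAt fre (1 + (1/5) * Real.exp (-x)) x := by
  have h1 : HasDerivAt (fun x : ℝ => Real.exp (-x)) (-Real.exp (-x)) x := by
    simpa using (hasDerivAt_neg x).exp
  have := ((hasDerivAt_id x).sub_const (1/5)).sub ((h1.const_mul (1/5 : ℝ)))
  exact this.congr_deriv (by ring)

lemma fre_mono : StrictMono fre := by
  apply strictMono_of_deriv_pos
  intro x
  rw [(fre_hasDeriv x).deriv]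
  positivity

/-- The characteristic function `g(s) = s − 1/5 − (1/5)e^{−s}` has exactly one zero in the
closed right half-plane, and this zero is real, positive, and simple. -/
theorem stmt12 :
    ∃ γ : ℝ, 0 < γ ∧
      ((γ : ℂ) - 1 / 5 - (1 / 5) * Complex.exp (-(γ : ℂ)) = 0) ∧
      deriv (fun s : ℂ => s - 1 / 5 - (1 / 5) * Complex.exp (-s)) (γ : ℂ) ≠ 0 ∧
      ∀ s : ℂ, 0 ≤ s.re → s - 1 / 5 - (1 / 5) * Complex.exp (-s) = 0 → s = (γ : ℂ) := by
  -- existence of real root via IVT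
  have hcont : ContinuousOn fre (Set.Icc 0 1) := by
    apply Continuous.continuousOn
    unfold fre
    continuity
  have h0 : fre 0 < 0 := by norm_num [fre]
  have h1 : (0:ℝ) < fre 1 := by
    have : Real.exp (-1) < 1 := Real.exp_lt_one_iff.mpr (by norm_num)
    simp only [fre]
    nlinarith
  obtain ⟨γ, hγmem, hγ0⟩ := intermediate_value_Icc (by norm_num : (0:ℝ) ≤ 1) hcont
    ⟨h0.le, h1.le⟩
  have hγpos : 0 < γ := by
    rcases lt_or_eq_of_le hγmem.1 with h | h
    · exact h
    · exfalso; rw [← h] at hγ0; linarith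
  refine ⟨γ, hγpos, ?_, ?_, ?_⟩
  · -- complex equation
    have : ((fre γ : ℝ) : ℂ) = 0 := by rw [hγ0]; norm_num
    simpa [fre, Complex.ofReal_exp, push_cast] using this
    -- fallback handled below
  · -- derivative nonzero
    have hd : HasDerivAt (fun s : ℂ => s - 1 / 5 - (1 / 5) * Complex.exp (-s))
        (1 + (1/5) * Complex.exp (-(γ:ℂ))) (γ:ℂ) := by
      have h1 : HasDerivAt (fun s : ℂ => Complex.exp (-s)) (-Complex.exp (-(γ:ℂ))) (γ:ℂ) := by
        simpa using (hasDerivAt_neg (γ:ℂ)).cexp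
      have := ((hasDerivAt_id (γ:ℂ)).sub_const (1/5)).sub (h1.const_mul (1/5 : ℂ))
      exact this.congr_deriv (by ring)
    rw [hd.deriv]
    intro h
    have hre := congrArg Complex.re h
    simp [Complex.exp_re, Complex.add_re, Complex.mul_re] at hre
    nlinarith [Real.exp_pos (-γ), Real.cos_le_one (-(γ:ℂ)).im, hre,
      Real.exp_pos (-(γ:ℂ)).re]
  · -- uniqueness
    intro s hs hzero
    set x := s.re with hx
    set y := s.im with hy
    have him := congrArg Complex.im hzero
    have hre := congrArg Complex.re hzero
    simp [Complex.exp_im, Complex.exp_re, Complex.sub_im, Complex.sub_re,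
      Complex.mul_im, Complex.mul_re, Complex.neg_re, Complex.neg_im] at him hre
    -- him : y − (1/5) * (exp(−x) * sin(−y)) = 0, i.e. y + (1/5)exp(−x) sin y = 0
    have hy0 : y = 0 := by
      have hexp : Real.exp (-x) ≤ 1 := Real.exp_le_one_iff.mpr (by linarith)
      have hsin : |Real.sin y| ≤ |y| := Real.abs_sin_le_abs
      have hyeq : y = -((1/5) * (Real.exp (-x) * Real.sin y)) := by
        simp only [hx, hy]; linarith [him]
      have hle : |y| ≤ (1/5) * |y| := by
        calc |y| = (1/5) * (Real.exp (-x) * |Real.sin y|) := by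
              rw [hyeq, abs_neg, abs_mul, abs_mul, abs_of_nonneg (by norm_num : (0:ℝ) ≤ 1/5),
                abs_of_nonneg (Real.exp_pos _).le, ← hyeq]
          _ ≤ (1/5) * (1 * |y|) := by
              apply mul_le_mul_of_nonneg_left _ (by norm_num)
              exact mul_le_mul hexp hsin (abs_nonneg _) zero_le_one
          _ = (1/5) * |y| := by ring
      have : |y| = 0 := by nlinarith [abs_nonneg y]
      exact abs_eq_zero.mp this
    have hxeq : fre x = 0 := by
      simp only [fre, hx]
      have : Real.cos s.im = 1 := by rw [← hy, hy0]; simp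
      rw [this] at hre
      linarith [hre]
    have hxγ : x = γ := fre_mono.injective (by rw [hxeq, hγ0])
    apply Complex.ext
    · simpa using hxγ
    · simpa using hy0
end
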